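/- For z > 0 and n ≥ 0, define ζ_n(z)² = z² + n + 1/2 − γ_n(z) − γ_{n+1}(z), where γ_n are the recurrence coefficients of the monic truncated Hermite polynomials (γ_0 = 0). Then ζ_n(z)² − z² > 0 for all n ≥ 0; in particular ζ_0(z)² − z² = z e^{-z²} / (√π · erf(z)). -/

import Mathlib

open Polynomial

/-- The truncated Hermite linear functional `L[p] = ∫_{-z}^{z} p(x) e^{-x²} dx`. -/
noncomputable def truncL (z : ℝ) (p : Polynomial ℝ) : ℝ :=
  ∫ x in (-z)..z, p.eval x * Real.exp (-x ^ 2)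

/-- The error function `erf(z) = (2/√π) ∫_0^z e^{-t²} dt`. -/
noncomputable def errFun (z : ℝ) : ℝ :=
  (2 / Real.sqrt Real.pi) * ∫ t in (0 : ℝ)..z, Real.exp (-t ^ 2)

lemma truncCont (p : Polynomial ℝ) : Continuous (fun x : ℝ => p.eval x * Real.exp (-x ^ 2)) :=
  (p.continuous_aeval.mul ((Real.continuous_exp.comp (continuous_pow 2).neg)) : _)

lemma truncInt (p : Polynomial ℝ) (a b : ℝ) :
    IntervalIntegrable (fun x : ℝ => p.eval x * Real.exp (-x ^ 2)) MeasureTheory.volume a b :=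
  (truncCont p).intervalIntegrable a b

lemma truncL_zero' (z : ℝ) : truncL z 0 = 0 := by simp [truncL]

lemma truncL_add (z : ℝ) (p q : Polynomial ℝ) : truncL z (p + q) = truncL z p + truncL z q := by
  unfold truncL
  rw [← intervalIntegral.integral_add (truncInt p _ _) (truncInt q _ _)]
  simp [add_mul]

lemma truncL_smul (z c : ℝ) (p : Polynomial ℝ) : truncL z (C c * p) = c * truncL z p := by
  unfold truncL
  rw [← intervalIntegral.integral_const_mul]
  simp [mul_assoc]

lemma truncIBP (z : ℝ) (p : Polynomial ℝ) :
    truncL z (derivative p - C 2 * X * p) =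
      (p.eval z - p.eval (-z)) * Real.exp (-z ^ 2) := by
  have hD : ∀ x : ℝ, HasDerivAt (fun x : ℝ => p.eval x * Real.exp (-x ^ 2))
      ((derivative p - C 2 * X * p).eval x * Real.exp (-x ^ 2)) x := by
    intro x
    have h1 : HasDerivAt (fun x : ℝ => p.eval x) ((derivative p).eval x) x :=
      p.hasDerivAt x
    have h2 : HasDerivAt (fun x : ℝ => Real.exp (-x ^ 2)) (Real.exp (-x ^ 2) * (-(2 * x))) x := by
      have : HasDerivAt (fun x : ℝ => -x ^ 2) (-(2 * x)) x := by
        simpa using ((hasDerivAt_pow 2 x).fun_neg)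
      exact this.exp
    have := h1.fun_mul h2
    refine this.congr_deriv ?_
    simp [eval_mul]
    ring
  have := intervalIntegral.integral_eq_sub_of_hasDerivAt (a := -z) (b := z)
    (fun x _ => hD x) (truncInt _ _ _)
  unfold truncL
  rw [this]
  have : (-z) ^ 2 = z ^ 2 := by ring
  rw [this]; ring

lemma truncPos (z : ℝ) (hz : 0 < z) (q : Polynomial ℝ) (hq : q ≠ 0) (g : ℝ → ℝ)
    (hgc : Continuous g) (hgnneg : ∀ x ∈ Set.Ioc (-z) z, 0 ≤ g x)
    (hgpos : ∀ x ∈ Set.Ioo (-z) z, 0 < g x) :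
    0 < ∫ x in (-z)..z, (q.eval x) ^ 2 * g x := by
  classical
  set f : ℝ → ℝ := fun x => (q.eval x) ^ 2 * g x with hf
  have hfi : IntervalIntegrable f MeasureTheory.volume (-z) z :=
    ((q.continuous_aeval.pow 2).mul hgc).intervalIntegrable _ _
  have hIoc : Set.uIoc (-z) z = Set.Ioc (-z) z := Set.uIoc_of_le (by linarith)
  have hae : 0 ≤ᵐ[MeasureTheory.volume.restrict (Set.uIoc (-z) z)] f := by
    rw [hIoc]
    filter_upwards [MeasureTheory.ae_restrict_mem measurableSet_Ioc] with x hx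
    exact mul_nonneg (sq_nonneg _) (hgnneg x hx)
  rw [intervalIntegral.integral_pos_iff_support_of_nonneg_ae' hae hfi]
  refine ⟨by linarith, ?_⟩
  have hsub : Set.Ioo (-z) z \ {x | q.IsRoot x} ⊆ Function.support f ∩ Set.Ioc (-z) z := by
    rintro x ⟨hx1, hx2⟩
    refine ⟨?_, hx1.1, hx1.2.le⟩
    have hqx : q.eval x ≠ 0 := hx2
    have := hgpos x hx1
    simp only [Function.mem_support, hf]
    positivity
  have hroots : MeasureTheory.volume {x : ℝ | q.IsRoot x} = 0 :=
    (Polynomial.finite_setOf_isRoot hq).measure_zero _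
  have hdiff : MeasureTheory.volume (Set.Ioo (-z) z \ {x | q.IsRoot x})
      = MeasureTheory.volume (Set.Ioo (-z) z) :=
    MeasureTheory.measure_diff_null hroots
  have hIoo : (0 : ENNReal) < MeasureTheory.volume (Set.Ioo (-z) z) := by
    rw [Real.volume_Ioo]
    simp only [ENNReal.ofReal_pos]
    linarith
  calc (0 : ENNReal) < MeasureTheory.volume (Set.Ioo (-z) z \ {x | q.IsRoot x}) := by
        rw [hdiff]; exact hIoo
    _ ≤ MeasureTheory.volume (Function.support f ∩ Set.Ioc (-z) z) :=
        MeasureTheory.measure_mono hsub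

lemma orth_lower (z : ℝ) (Q : ℕ → Polynomial ℝ) (hm : ∀ n, (Q n).Monic)
    (hd : ∀ n, (Q n).natDegree = n) (ho : ∀ m n, m ≠ n → truncL z (Q m * Q n) = 0)
    (d : ℕ) : ∀ (n : ℕ) (q : Polynomial ℝ), q.natDegree ≤ d → q.degree < (n : ℕ) →
      truncL z (Q n * q) = 0 := by
  induction d with
  | zero =>
    intro n q hq hdeg
    by_cases hq0 : q = 0
    · simp [hq0, truncL_zero']
    · have hqC : q = C (q.coeff 0) := Polynomial.eq_C_of_natDegree_le_zero hq
      have hn : n ≠ 0 := by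
        rintro rfl
        rw [Polynomial.degree_eq_natDegree hq0] at hdeg
        exact absurd hdeg (by simp)
      have hQ0 : Q 0 = 1 := by
        have h1 := Polynomial.eq_C_of_natDegree_le_zero (le_of_eq (hd 0))
        rw [h1]
        have h2 : (Q 0).coeff 0 = 1 := by
          have := (hm 0).leadingCoeff
          rwa [Polynomial.leadingCoeff, hd 0] at this
        rw [h2]; simp
      set c0 := q.coeff 0 with hc0
      calc truncL z (Q n * q) = truncL z (C c0 * (Q n * Q 0)) := by
            rw [hqC, hQ0]; ring_nf
        _ = c0 * truncL z (Q n * Q 0) := truncL_smul _ _ _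
        _ = 0 := by rw [ho n 0 hn, mul_zero]
  | succ d ih =>
    intro n q hq hdeg
    by_cases hq0 : q = 0
    · simp [hq0, truncL_zero']
    by_cases hle : q.natDegree ≤ d
    · exact ih n q hle hdeg
    have hnd : q.natDegree = d + 1 := le_antisymm hq (Nat.succ_le_of_lt (lt_of_not_ge hle))
    have hdn : d + 1 < n := by
      rw [Polynomial.degree_eq_natDegree hq0, hnd] at hdeg
      exact_mod_cast hdeg
    set c := q.coeff (d + 1) with hc
    set r := q - C c * Q (d + 1) with hr
    have hrd : r.natDegree ≤ d := by
      rw [Polynomial.natDegree_le_iff_coeff_eq_zero]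
      intro m hm'
      rcases eq_or_lt_of_le (Nat.succ_le_of_lt hm') with h | h
      · have hcoef : (Q (d + 1)).coeff (d + 1) = 1 := by
          have := (hm (d + 1)).leadingCoeff
          rwa [Polynomial.leadingCoeff, hd (d + 1)] at this
        simp [hr, Polynomial.coeff_sub, Polynomial.coeff_C_mul, ← h, hcoef, hc]
      · have h1 : q.coeff m = 0 := Polynomial.coeff_eq_zero_of_natDegree_lt (by omega)
        have h2 : (Q (d + 1)).coeff m = 0 :=
          Polynomial.coeff_eq_zero_of_natDegree_lt (by rw [hd]; omega)
        simp [hr, Polynomial.coeff_sub, Polynomial.coeff_C_mul, h1, h2]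
    have hrdeg : r.degree < (n : ℕ) := by
      calc r.degree ≤ (r.natDegree : WithBot ℕ) := Polynomial.degree_le_natDegree
        _ ≤ (d : WithBot ℕ) := by exact_mod_cast hrd
        _ < (n : ℕ) := by exact_mod_cast lt_trans (Nat.lt_succ_self d) hdn
    have hsplit : q = C c * Q (d + 1) + r := by rw [hr]; ring
    calc truncL z (Q n * q) = truncL z (C c * (Q n * Q (d + 1)) + Q n * r) := by
          rw [hsplit]; ring_nf
      _ = c * truncL z (Q n * Q (d + 1)) + truncL z (Q n * r) := by
          rw [truncL_add, truncL_smul]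
      _ = 0 := by rw [ho n (d + 1) (by omega), ih n r hrd hrdeg, mul_zero, add_zero]

theorem truncated_hermite_zeta (P : ℝ → ℕ → Polynomial ℝ) (γ h : ℕ → ℝ → ℝ)
    (hmonic : ∀ z n, (P z n).Monic) (hdeg : ∀ z n, (P z n).natDegree = n)
    (horth : ∀ z, 0 < z → ∀ m n, m ≠ n → truncL z (P z m * P z n) = 0)
    (hP0 : ∀ z, P z 0 = 1) (hP1 : ∀ z, P z 1 = X)
    (hrec : ∀ z, 0 < z → ∀ n, X * P z (n + 1) = P z (n + 2) + C (γ (n + 1) z) * P z n)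
    (hh : ∀ n z, h n z = truncL z (P z n * P z n)) (hγ0 : ∀ z, γ 0 z = 0) (z : ℝ) (hz : 0 < z) :
    (∀ n : ℕ, 0 < (z ^ 2 + (n : ℝ) + 1 / 2 - γ n z - γ (n + 1) z) - z ^ 2) ∧
      (z ^ 2 + (0 : ℝ) + 1 / 2 - γ 0 z - γ 1 z) - z ^ 2 =
        z * Real.exp (-z ^ 2) / (Real.sqrt Real.pi * errFun z) := by
  set Q : ℕ → Polynomial ℝ := P z with hQdef
  have horth' : ∀ m n, m ≠ n → truncL z (Q m * Q n) = 0 := horth z hz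
  have hlow : ∀ (n : ℕ) (q : Polynomial ℝ), q.degree < (n : ℕ) → truncL z (Q n * q) = 0 :=
    fun n q hq => orth_lower z Q (fun n => hmonic z n) (fun n => hdeg z n) horth'
      q.natDegree n q le_rfl hq
  have hQne : ∀ n, Q n ≠ 0 := fun n => (hmonic z n).ne_zero
  have hx : ∀ m : ℕ, (X : Polynomial ℝ) * Q (m + 1) = Q (m + 2) + C (γ (m + 1) z) * Q m :=
    hrec z hz
  -- positivity of H n
  have Hpos : ∀ n, 0 < truncL z (Q n * Q n) := by
    intro n
    have heq : truncL z (Q n * Q n)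
        = ∫ x in (-z)..z, ((Q n).eval x) ^ 2 * Real.exp (-x ^ 2) := by
      simp [truncL, sq]
    rw [heq]
    exact truncPos z hz (Q n) (hQne n) _
      (Real.continuous_exp.comp (continuous_pow 2).neg)
      (fun x _ => (Real.exp_pos _).le) (fun x _ => Real.exp_pos _)
  -- recurrence for H
  have Hrec : ∀ n, truncL z (Q (n + 1) * Q (n + 1)) = γ (n + 1) z * truncL z (Q n * Q n) := by
    intro n
    have h1 : truncL z (X * Q (n + 1) * Q n) = γ (n + 1) z * truncL z (Q n * Q n) := by
      have he : X * Q (n + 1) * Q n = Q (n + 2) * Q n + C (γ (n + 1) z) * (Q n * Q n) := by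
        rw [hx n]; ring
      rw [he, truncL_add, truncL_smul, horth' (n + 2) n (by omega), zero_add]
    have h2 : truncL z (X * Q (n + 1) * Q n) = truncL z (Q (n + 1) * Q (n + 1)) := by
      cases n with
      | zero =>
        have he : (X : Polynomial ℝ) * Q 1 * Q 0 = Q 1 * Q 1 := by
          simp [hQdef, hP0 z, hP1 z]
        rw [he]
      | succ m =>
        have he : X * Q (m + 2) * Q (m + 1)
            = Q (m + 2) * Q (m + 2) + C (γ (m + 1) z) * (Q (m + 2) * Q m) := by
          have : X * Q (m + 2) * Q (m + 1) = (X * Q (m + 1)) * Q (m + 2) := by ring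
          rw [this, hx m]; ring
        rw [he, truncL_add, truncL_smul, horth' (m + 2) m (by omega), mul_zero, add_zero]
    rw [← h2, h1]
  -- eval at z is nonzero
  have evalz_ne : ∀ n, (Q n).eval z ≠ 0 := by
    intro n hroot
    cases n with
    | zero => rw [hQdef, hP0 z] at hroot; simp at hroot
    | succ m =>
      obtain ⟨W, hW⟩ := (Polynomial.dvd_iff_isRoot).2 hroot
      have hWne : W ≠ 0 := by
        rintro rfl
        rw [mul_zero] at hW
        exact hQne _ hW
      have hdW : W.degree < ((m + 1 : ℕ) : WithBot ℕ) := by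
        have hdq : (Q (m + 1)).natDegree = m + 1 := hdeg z (m + 1)
        have hXz : (X - C z : Polynomial ℝ) ≠ 0 := Polynomial.X_sub_C_ne_zero z
        rw [hW, Polynomial.natDegree_mul hXz hWne, Polynomial.natDegree_X_sub_C] at hdq
        calc W.degree ≤ (W.natDegree : WithBot ℕ) := Polynomial.degree_le_natDegree
          _ < ((m + 1 : ℕ) : WithBot ℕ) := by exact_mod_cast (by omega : W.natDegree < m + 1)
      have h0 : truncL z (Q (m + 1) * W) = 0 := hlow (m + 1) W hdW
      have hpos : 0 < ∫ x in (-z)..z, (W.eval x) ^ 2 * ((z - x) * Real.exp (-x ^ 2)) := by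
        refine truncPos z hz W hWne _ ?_ ?_ ?_
        · exact ((continuous_const.sub continuous_id).mul
            (Real.continuous_exp.comp (continuous_pow 2).neg))
        · intro x hxm
          exact mul_nonneg (by linarith [hxm.2]) (Real.exp_pos _).le
        · intro x hxm
          exact mul_pos (by linarith [hxm.2]) (Real.exp_pos _)
      have hneg : truncL z (Q (m + 1) * W)
          = -∫ x in (-z)..z, (W.eval x) ^ 2 * ((z - x) * Real.exp (-x ^ 2)) := by
        rw [hW]
        unfold truncL
        rw [← intervalIntegral.integral_neg]
        congr 1
        funext x
        simp only [Polynomial.eval_mul, Polynomial.eval_sub, Polynomial.eval_X,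
          Polynomial.eval_C]
        ring
      rw [hneg] at h0
      linarith
  -- Term A : truncL (X * (Q n * derivative (Q n))) = n * H n
  have TermA : ∀ n : ℕ, truncL z (X * (Q n * derivative (Q n))) = n * truncL z (Q n * Q n) := by
    intro n
    cases n with
    | zero =>
      have he : (X : Polynomial ℝ) * (Q 0 * derivative (Q 0)) = 0 := by
        rw [hQdef, hP0 z]; simp
      rw [he, truncL_zero']
      simp
    | succ m =>
      set D := derivative (Q (m + 1)) with hD
      have hsplit : X * (Q (m + 1) * D) = Q (m + 2) * D + C (γ (m + 1) z) * (Q m * D) := by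
        have : X * (Q (m + 1) * D) = (X * Q (m + 1)) * D := by ring
        rw [this, hx m]; ring
      rw [hsplit, truncL_add, truncL_smul]
      have h1 : truncL z (Q (m + 2) * D) = 0 := by
        apply hlow
        calc D.degree < (Q (m + 1)).degree := Polynomial.degree_derivative_lt (hQne (m + 1))
          _ = ((m + 1 : ℕ) : WithBot ℕ) := by
              rw [Polynomial.degree_eq_natDegree (hQne (m + 1)), hdeg z (m + 1)]
          _ ≤ ((m + 2 : ℕ) : WithBot ℕ) := by exact_mod_cast (by omega : m + 1 ≤ m + 2)
      set r := D - C ((m : ℝ) + 1) * Q m with hrdef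
      have hr : r.degree < ((m : ℕ) : WithBot ℕ) := by
        rw [Polynomial.degree_lt_iff_coeff_zero]
        intro k hk
        have hk' : m ≤ k := by exact_mod_cast hk
        have hDk : r.coeff k = (Q (m + 1)).coeff (k + 1) * ((k : ℝ) + 1)
            - ((m : ℝ) + 1) * (Q m).coeff k := by
          rw [hrdef, Polynomial.coeff_sub, Polynomial.coeff_C_mul, hD,
            Polynomial.coeff_derivative]
        rcases eq_or_lt_of_le hk' with h | h
        · subst h
          have c1 : (Q (m + 1)).coeff (m + 1) = 1 := by
            have := (hmonic z (m + 1)).leadingCoeff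
            rwa [Polynomial.leadingCoeff, hdeg z (m + 1)] at this
          have c2 : (Q m).coeff m = 1 := by
            have := (hmonic z m).leadingCoeff
            rwa [Polynomial.leadingCoeff, hdeg z m] at this
          rw [hDk, c1, c2]; ring
        · have c1 : (Q (m + 1)).coeff (k + 1) = 0 :=
            Polynomial.coeff_eq_zero_of_natDegree_lt (by rw [hdeg z (m + 1)]; omega)
          have c2 : (Q m).coeff k = 0 :=
            Polynomial.coeff_eq_zero_of_natDegree_lt (by rw [hdeg z m]; omega)
          rw [hDk, c1, c2]; ring
      have h2 : truncL z (Q m * D) = ((m : ℝ) + 1) * truncL z (Q m * Q m) := by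
        have he : Q m * D = C ((m : ℝ) + 1) * (Q m * Q m) + Q m * r := by
          rw [hrdef]; ring
        rw [he, truncL_add, truncL_smul, hlow m r hr, add_zero]
      rw [h1, h2, zero_add, Hrec m]
      push_cast
      ring
  -- Term B : truncL ((X*Qn)*(X*Qn)) = (γ n + γ (n+1)) * H n
  have TermB : ∀ n : ℕ, truncL z ((X * Q n) * (X * Q n))
      = (γ n z + γ (n + 1) z) * truncL z (Q n * Q n) := by
    intro n
    cases n with
    | zero =>
      have he : (X : Polynomial ℝ) * Q 0 = Q 1 := by
        rw [hQdef, hP0 z, hP1 z]; ring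
      rw [he, Hrec 0, hγ0 z]
      ring
    | succ m =>
      rw [hx m]
      have he : (Q (m + 2) + C (γ (m + 1) z) * Q m) * (Q (m + 2) + C (γ (m + 1) z) * Q m)
          = Q (m + 2) * Q (m + 2) + (C (2 * γ (m + 1) z) * (Q (m + 2) * Q m)
            + C (γ (m + 1) z * γ (m + 1) z) * (Q m * Q m)) := by
        rw [map_mul, map_mul, map_ofNat]
        ring
      rw [he, truncL_add, truncL_add, truncL_smul, truncL_smul,
        horth' (m + 2) m (by omega), mul_zero, zero_add, Hrec (m + 1), Hrec m]
      ring
  -- master identity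
  have master : ∀ n : ℕ, (2 * (n : ℝ) + 1 - 2 * γ n z - 2 * γ (n + 1) z) * truncL z (Q n * Q n)
      = z * (((Q n).eval z) ^ 2 + ((Q n).eval (-z)) ^ 2) * Real.exp (-z ^ 2) := by
    intro n
    have ibp := truncIBP z (X * (Q n * Q n))
    have hev : (X * (Q n * Q n)).eval z - (X * (Q n * Q n)).eval (-z)
        = z * (((Q n).eval z) ^ 2 + ((Q n).eval (-z)) ^ 2) := by
      simp [Polynomial.eval_mul]
      ring
    have hder : derivative (X * (Q n * Q n)) - C 2 * X * (X * (Q n * Q n))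
        = Q n * Q n + (C 2 * (X * (Q n * derivative (Q n)))
          + C (-2) * ((X * Q n) * (X * Q n))) := by
      rw [Polynomial.derivative_mul, Polynomial.derivative_mul, Polynomial.derivative_X,
        map_neg, map_ofNat]
      ring
    rw [hder, truncL_add, truncL_add, truncL_smul, truncL_smul, TermA n, TermB n, hev] at ibp
    rw [← ibp]
    ring
  have hE : 0 < Real.exp (-z ^ 2) := Real.exp_pos _
  constructor
  · intro n
    have hm := master n
    have hb : 0 < ((Q n).eval z) ^ 2 + ((Q n).eval (-z)) ^ 2 := by
      have := evalz_ne n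
      positivity
    have hrhs : 0 < z * (((Q n).eval z) ^ 2 + ((Q n).eval (-z)) ^ 2) * Real.exp (-z ^ 2) := by
      positivity
    have hHn := Hpos n
    nlinarith [hm, hrhs, hHn]
  · -- explicit formula for n = 0
    have hm := master 0
    have he1 : (Q 0).eval z = 1 := by rw [hQdef, hP0 z]; simp
    have he2 : (Q 0).eval (-z) = 1 := by rw [hQdef, hP0 z]; simp
    rw [he1, he2, hγ0 z] at hm
    have hH0 : truncL z (Q 0 * Q 0) = Real.sqrt Real.pi * errFun z := by
      have h1 : truncL z (Q 0 * Q 0) = ∫ x in (-z)..z, Real.exp (-x ^ 2) := by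
        rw [hQdef, hP0 z]
        simp [truncL]
      have hint : ∀ a b : ℝ, IntervalIntegrable (fun x : ℝ => Real.exp (-x ^ 2))
          MeasureTheory.volume a b :=
        fun a b => (Real.continuous_exp.comp (continuous_pow 2).neg).intervalIntegrable a b
      have ha : (∫ x in (-z)..(0 : ℝ), Real.exp (-x ^ 2))
          = ∫ x in (0 : ℝ)..z, Real.exp (-x ^ 2) := by
        have := intervalIntegral.integral_comp_neg (a := (0 : ℝ)) (b := z)
          (fun x => Real.exp (-x ^ 2))
        simp only [neg_zero] at this
        rw [← this]
        congr 1
        funext x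
        rw [neg_sq]
      have h2 : (∫ x in (-z)..z, Real.exp (-x ^ 2))
          = 2 * ∫ t in (0 : ℝ)..z, Real.exp (-t ^ 2) := by
        rw [← intervalIntegral.integral_add_adjacent_intervals (hint (-z) 0) (hint 0 z), ha]
        ring
      rw [h1, h2]
      unfold errFun
      have hpi : Real.sqrt Real.pi ≠ 0 := by
        positivity
      field_simp
    have hH0pos : 0 < truncL z (Q 0 * Q 0) := Hpos 0
    rw [← hH0]
    have hγ0' := hγ0 z
    field_simp
    push_cast at hm
    nlinarith [hm]
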